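/- Let n ≥ 2, let GHZ n be the normalized n-qubit GHZ-state, and let S ⊆ Fin n be nonempty with S ≠ Fin n. Then GHZ n does not admit a symmetric move for S: there is an orthonormal basis e of ℂ² (namely the computational basis) such that coeff (GHZ n) e (fun i => if i ∈ S then l else 1 - l) = 0 for every l : Fin 2. (This is the characterization underlying Theorem 2 of the paper: the GHZ-state allows no k-symmetric moves for any proper subset of the processors.) -/
import Mathlib


/-- Coefficient of `ψ` on the product basis vector `⊗ᵢ e (f i)`. -/
noncomputable def coeff {n : ℕ} (ψ : (Fin n → Fin 2) → ℂ)
    (e : Fin 2 → EuclideanSpace ℂ (Fin 2)) (f : Fin n → Fin 2) : ℂ :=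
  ∑ x : Fin n → Fin 2, (∏ i, star ((e (f i)) (x i))) * ψ x

/-- The normalized `n`-qubit GHZ-state: amplitude `1/√2` on constant
computational-basis strings, and `0` elsewhere. -/
noncomputable def GHZstate (n : ℕ) : (Fin n → Fin 2) → ℂ := fun x =>
  if ∀ i j, x i = x j then (1 / Real.sqrt 2 : ℂ) else 0

theorem GHZ_no_proper_symmetric_move {n : ℕ} (hn : 2 ≤ n)
    (S : Finset (Fin n)) (hS : S.Nonempty) (hS' : S ≠ Finset.univ) :
    ∃ e : OrthonormalBasis (Fin 2) ℂ (EuclideanSpace ℂ (Fin 2)),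
      ∀ l : Fin 2,
        coeff (GHZstate n) (fun j => e j) (fun i => if i ∈ S then l else 1 - l) = 0 := by
  refine ⟨EuclideanSpace.basisFun (Fin 2) ℂ, fun l => ?_⟩
  set f : Fin n → Fin 2 := fun i => if i ∈ S then l else 1 - l with hf
  have key : ∀ g : Fin n → Fin 2,
      coeff (GHZstate n) (fun j => (EuclideanSpace.basisFun (Fin 2) ℂ) j) g = GHZstate n g := by
    intro g
    unfold coeff
    rw [Finset.sum_eq_single g]
    · have : ∀ i : Fin n, star (((EuclideanSpace.basisFun (Fin 2) ℂ) (g i)) (g i)) = (1:ℂ) := by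
        intro i
        simp [EuclideanSpace.basisFun_apply, EuclideanSpace.single_apply]
      simp [this]
    · intro x _ hx
      obtain ⟨i, hi⟩ := Function.ne_iff.mp hx
      have : star (((EuclideanSpace.basisFun (Fin 2) ℂ) (g i)) (x i)) = (0:ℂ) := by
        simp [EuclideanSpace.basisFun_apply, EuclideanSpace.single_apply, hi]
      rw [Finset.prod_eq_zero (Finset.mem_univ i) this, zero_mul]
    · simp
  rw [key]
  unfold GHZstate
  rw [if_neg]
  intro h
  obtain ⟨a, ha⟩ := hS
  obtain ⟨b, hb⟩ : ∃ b, b ∉ S := by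
    by_contra hb; push_neg at hb
    exact hS' (Finset.eq_univ_iff_forall.mpr hb)
  have := h a b
  simp only [hf, if_pos ha, if_neg hb] at this
  revert this; fin_cases l <;> decide
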